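/- For every d ∈ {1,2,3}, all positive integers N, k, and every integer n, the virtual structure constants satisfy the reflection symmetry L̃_n^{N,k,d} = L̃_{N−1−(N−k)d−n}^{N,k,d}. -/

import Mathlib

/-- The degree-1 virtual structure constant `L̃_n^{N,k,1}` (independent of `N`):
the coefficient of `w^n` in `k·∏_{j=1}^{k−1}(j·w + (k−j))`, and `0` for `n` outside `[0, k−1]`. -/
noncomputable def L1 (k : ℕ) (n : ℤ) : ℚ :=
  if 0 ≤ n then
    (Polynomial.C (k : ℚ) *
      ∏ j ∈ Finset.Icc 1 (k - 1),
        (Polynomial.C (j : ℚ) * Polynomial.X + Polynomial.C ((k - j : ℕ) : ℚ))).coeff n.toNat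
  else 0

open Polynomial

lemma reverse_linear (a b : ℚ) (ha : a ≠ 0) (_hb : b ≠ 0) :
    (C a * X + C b).reverse = C b * X + C a := by
  have hd : (C a * X + C b).natDegree = 1 := natDegree_linear ha
  unfold Polynomial.reverse
  rw [hd]
  ext i
  rcases i with _ | _ | i
  · simp [coeff_reflect]
  · simp [coeff_reflect]
  · rw [coeff_reflect]
    simp [revAt_eq_self_of_lt, coeff_X, coeff_C]

lemma reverse_prod {ι : Type*} (s : Finset ι) (f : ι → Polynomial ℚ) :
    (∏ i ∈ s, f i).reverse = ∏ i ∈ s, (f i).reverse := by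
  classical
  induction s using Finset.induction_on with
  | empty => rw [Finset.prod_empty, Finset.prod_empty, ← C_1, reverse_C]
  | insert _ _ h ih =>
      rw [Finset.prod_insert h, Finset.prod_insert h, reverse_mul_of_domain, ih]

lemma L1_symm (k : ℕ) (hk : 1 ≤ k) (n : ℤ) : L1 k n = L1 k ((k:ℤ) - 1 - n) := by
  have hk0 : (k : ℚ) ≠ 0 := Nat.cast_ne_zero.mpr (by omega)
  have hfac : ∀ j ∈ Finset.Icc 1 (k-1),
      (C (j:ℚ) * X + C ((k - j : ℕ) : ℚ)) ≠ 0 := by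
    intro j hj h
    simp only [Finset.mem_Icc] at hj
    have hd := natDegree_linear (a := (j:ℚ)) (b := ((k - j : ℕ) : ℚ))
      (Nat.cast_ne_zero.mpr (by omega))
    rw [h, natDegree_zero] at hd
    exact one_ne_zero hd.symm
  have hdeg : (Polynomial.C (k : ℚ) *
      ∏ j ∈ Finset.Icc 1 (k - 1),
        (Polynomial.C (j : ℚ) * Polynomial.X + Polynomial.C ((k - j : ℕ) : ℚ))).natDegree
      = k - 1 := by
    rw [natDegree_C_mul hk0, natDegree_prod _ _ hfac]
    rw [Finset.sum_congr rfl (fun j hj => natDegree_linear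
      (Nat.cast_ne_zero.mpr (by simp only [Finset.mem_Icc] at hj; omega)))]
    simp [Nat.card_Icc]
  have hrev : (Polynomial.C (k : ℚ) *
      ∏ j ∈ Finset.Icc 1 (k - 1),
        (Polynomial.C (j : ℚ) * Polynomial.X + Polynomial.C ((k - j : ℕ) : ℚ))).reverse
      = (Polynomial.C (k : ℚ) *
      ∏ j ∈ Finset.Icc 1 (k - 1),
        (Polynomial.C (j : ℚ) * Polynomial.X + Polynomial.C ((k - j : ℕ) : ℚ))) := by
    rw [reverse_mul_of_domain, reverse_C, reverse_prod]
    congr 1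
    rw [Finset.prod_congr rfl (fun j hj => by
      simp only [Finset.mem_Icc] at hj
      exact reverse_linear _ _ (Nat.cast_ne_zero.mpr (by omega))
        (Nat.cast_ne_zero.mpr (by omega)))]
    apply Finset.prod_nbij' (fun j => k - j) (fun j => k - j)
    · intro a ha; simp only [Finset.mem_Icc] at *; omega
    · intro a ha; simp only [Finset.mem_Icc] at *; omega
    · intro a ha; simp only [Finset.mem_Icc] at *; omega
    · intro a ha; simp only [Finset.mem_Icc] at *; omega
    · intro a ha
      simp only [Finset.mem_Icc] at ha
      have : k - (k - a) = a := by omega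
      rw [this]
  have key : ∀ i : ℕ, i ≤ k - 1 →
      (Polynomial.C (k : ℚ) *
      ∏ j ∈ Finset.Icc 1 (k - 1),
        (Polynomial.C (j : ℚ) * Polynomial.X + Polynomial.C ((k - j : ℕ) : ℚ))).coeff i
      = (Polynomial.C (k : ℚ) *
      ∏ j ∈ Finset.Icc 1 (k - 1),
        (Polynomial.C (j : ℚ) * Polynomial.X + Polynomial.C ((k - j : ℕ) : ℚ))).coeff (k - 1 - i) := by
    intro i hi
    conv_lhs => rw [← hrev]
    rw [coeff_reverse, hdeg, revAt_le hi]
  have hzero : ∀ i : ℕ, k - 1 < i →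
      (Polynomial.C (k : ℚ) *
      ∏ j ∈ Finset.Icc 1 (k - 1),
        (Polynomial.C (j : ℚ) * Polynomial.X + Polynomial.C ((k - j : ℕ) : ℚ))).coeff i = 0 := by
    intro i hi
    exact coeff_eq_zero_of_natDegree_lt (by omega)
  unfold L1
  split_ifs with h1 h2 h2
  · have e : ((k:ℤ) - 1 - n).toNat = k - 1 - n.toNat := by omega
    rw [e]
    exact key n.toNat (by omega)
  · exact hzero n.toNat (by omega)
  · exact (hzero ((k:ℤ) - 1 - n).toNat (by omega)).symm
  · rfl

/-- Reflection symmetry `L̃_n^{N,k,d} = L̃_{N−1−(N−k)d−n}^{N,k,d}` for `d = 1, 2, 3`.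
Here `L2 N n` and `L3 N n` play the roles of the virtual structure constants
`L̃_n^{N,k,2}` and `L̃_n^{N,k,3}`, uniquely determined by the vanishing conditions and
recursions below (with `L̃_n^{N,k,1} = L1 k n`, independent of `N`). -/
theorem stmt3 (k : ℕ) (hk : 1 ≤ k) (L2 L3 : ℕ → ℤ → ℚ)
    (hvan2 : ∀ (M : ℕ) (m : ℤ), 1 ≤ M →
      (m < 0 ∨ (M : ℤ) - 1 - ((M : ℤ) - (k : ℤ)) * 2 < m) → L2 M m = 0)
    (hrec2 : ∀ (M : ℕ) (m : ℤ), 1 ≤ M →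
      L2 M m / 2 = (1 / 2) * (L2 (M + 1) (m - 1) / 2) + (1 / 2) * (L2 (M + 1) m / 2)
        + (1 / 2) * L1 k m * L1 k (m + ((M : ℤ) - (k : ℤ))))
    (hvan3 : ∀ (M : ℕ) (m : ℤ), 1 ≤ M →
      (m < 0 ∨ (M : ℤ) - 1 - ((M : ℤ) - (k : ℤ)) * 3 < m) → L3 M m = 0)
    (hrec3 : ∀ (M : ℕ) (m : ℤ), 1 ≤ M →
      L3 M m / 3 = (2 / 9) * (L3 (M + 1) (m - 2) / 3) + (5 / 9) * (L3 (M + 1) (m - 1) / 3)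
        + (2 / 9) * (L3 (M + 1) m / 3)
        + (4 / 9) * (L2 (M + 1) (m - 1) / 2) * L1 k (m + 2 * ((M : ℤ) - (k : ℤ)))
        + (1 / 3) * (L2 (M + 1) m / 2) * L1 k (m + 2 * ((M : ℤ) - (k : ℤ)))
        + (2 / 9) * (L2 (M + 1) m / 2) * L1 k (m + 1 + 2 * ((M : ℤ) - (k : ℤ)))
        + (2 / 9) * L1 k (m - 1) * (L2 (M + 1) (m - 1 + ((M : ℤ) - (k : ℤ))) / 2)
        + (1 / 3) * L1 k m * (L2 (M + 1) (m - 1 + ((M : ℤ) - (k : ℤ))) / 2)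
        + (4 / 9) * L1 k m * (L2 (M + 1) (m + ((M : ℤ) - (k : ℤ))) / 2)
        + (1 / 3) * L1 k m * L1 k (m + ((M : ℤ) - (k : ℤ))) * L1 k (m + 2 * ((M : ℤ) - (k : ℤ)))) :
    ∀ (N : ℕ), 1 ≤ N → ∀ n : ℤ,
      L1 k n = L1 k ((N : ℤ) - 1 - ((N : ℤ) - (k : ℤ)) * 1 - n) ∧
      L2 N n = L2 N ((N : ℤ) - 1 - ((N : ℤ) - (k : ℤ)) * 2 - n) ∧
      L3 N n = L3 N ((N : ℤ) - 1 - ((N : ℤ) - (k : ℤ)) * 3 - n) := by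
  have h1 : ∀ n : ℤ, L1 k n = L1 k ((k:ℤ) - 1 - n) := L1_symm k hk
  have key : ∀ j M : ℕ, 1 ≤ M → 2*k ≤ M + j → ∀ n : ℤ,
      L2 M n = L2 M (2*(k:ℤ) - (M:ℤ) - 1 - n) ∧
      L3 M n = L3 M (3*(k:ℤ) - 2*(M:ℤ) - 1 - n) := by
    intro j
    induction j with
    | zero =>
      intro M hM hMk n
      constructor
      · rw [hvan2 M n hM (by omega), hvan2 M _ hM (by omega)]
      · rw [hvan3 M n hM (by omega), hvan3 M _ hM (by omega)]
    | succ j IHj =>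
      intro M hM hMk m
      have IH2 : ∀ n : ℤ, L2 (M+1) n = L2 (M+1) (2*(k:ℤ) - ((M:ℕ)+1 : ℕ) - 1 - n) :=
        fun n => (IHj (M+1) (by omega) (by omega) n).1
      have IH3 : ∀ n : ℤ, L3 (M+1) n = L3 (M+1) (3*(k:ℤ) - 2*((M:ℕ)+1 : ℕ) - 1 - n) :=
        fun n => (IHj (M+1) (by omega) (by omega) n).2
      constructor
      · -- L2 part
        have hA := hrec2 M m hM
        have hB := hrec2 M (2*(k:ℤ) - (M:ℤ) - 1 - m) hM
        have e1 : L2 (M+1) (2*(k:ℤ) - (M:ℤ) - 1 - m - 1) = L2 (M+1) m :=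
          (IH2 _).trans (congrArg _ (by push_cast; ring))
        have e2 : L2 (M+1) (2*(k:ℤ) - (M:ℤ) - 1 - m) = L2 (M+1) (m - 1) :=
          (IH2 _).trans (congrArg _ (by push_cast; ring))
        have e3 : L1 k (2*(k:ℤ) - (M:ℤ) - 1 - m) = L1 k (m + ((M:ℤ) - (k:ℤ))) :=
          (h1 _).trans (congrArg _ (by ring))
        have e4 : L1 k (2*(k:ℤ) - (M:ℤ) - 1 - m + ((M:ℤ) - (k:ℤ))) = L1 k m :=
          (h1 _).trans (congrArg _ (by ring))
        rw [e1, e2, e3, e4] at hB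
        linear_combination 2*hA - 2*hB
      · -- L3 part
        have hA := hrec3 M m hM
        have hB := hrec3 M (3*(k:ℤ) - 2*(M:ℤ) - 1 - m) hM
        have f1 : L3 (M+1) (3*(k:ℤ) - 2*(M:ℤ) - 1 - m - 2) = L3 (M+1) m :=
          (IH3 _).trans (congrArg _ (by push_cast; ring))
        have f2 : L3 (M+1) (3*(k:ℤ) - 2*(M:ℤ) - 1 - m - 1) = L3 (M+1) (m - 1) :=
          (IH3 _).trans (congrArg _ (by push_cast; ring))
        have f3 : L3 (M+1) (3*(k:ℤ) - 2*(M:ℤ) - 1 - m) = L3 (M+1) (m - 2) :=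
          (IH3 _).trans (congrArg _ (by push_cast; ring))
        have f4 : L2 (M+1) (3*(k:ℤ) - 2*(M:ℤ) - 1 - m - 1) = L2 (M+1) (m + ((M:ℤ) - (k:ℤ))) :=
          (IH2 _).trans (congrArg _ (by push_cast; ring))
        have f5 : L2 (M+1) (3*(k:ℤ) - 2*(M:ℤ) - 1 - m) = L2 (M+1) (m - 1 + ((M:ℤ) - (k:ℤ))) :=
          (IH2 _).trans (congrArg _ (by push_cast; ring))
        have f6 : L2 (M+1) (3*(k:ℤ) - 2*(M:ℤ) - 1 - m - 1 + ((M:ℤ) - (k:ℤ))) = L2 (M+1) m :=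
          (IH2 _).trans (congrArg _ (by push_cast; ring))
        have f7 : L2 (M+1) (3*(k:ℤ) - 2*(M:ℤ) - 1 - m + ((M:ℤ) - (k:ℤ))) = L2 (M+1) (m - 1) :=
          (IH2 _).trans (congrArg _ (by push_cast; ring))
        have g1 : L1 k (3*(k:ℤ) - 2*(M:ℤ) - 1 - m + 2 * ((M:ℤ) - (k:ℤ))) = L1 k m :=
          (h1 _).trans (congrArg _ (by ring))
        have g2 : L1 k (3*(k:ℤ) - 2*(M:ℤ) - 1 - m + 1 + 2 * ((M:ℤ) - (k:ℤ))) = L1 k (m - 1) :=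
          (h1 _).trans (congrArg _ (by ring))
        have g3 : L1 k (3*(k:ℤ) - 2*(M:ℤ) - 1 - m - 1) = L1 k (m + 1 + 2 * ((M:ℤ) - (k:ℤ))) :=
          (h1 _).trans (congrArg _ (by ring))
        have g4 : L1 k (3*(k:ℤ) - 2*(M:ℤ) - 1 - m) = L1 k (m + 2 * ((M:ℤ) - (k:ℤ))) :=
          (h1 _).trans (congrArg _ (by ring))
        have g5 : L1 k (3*(k:ℤ) - 2*(M:ℤ) - 1 - m + ((M:ℤ) - (k:ℤ))) = L1 k (m + ((M:ℤ) - (k:ℤ))) :=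
          (h1 _).trans (congrArg _ (by ring))
        rw [f1, f2, f3, f4, f5, f6, f7, g1, g2, g3, g4, g5] at hB
        linear_combination 3*hA - 3*hB
  intro N hN n
  refine ⟨(h1 n).trans (congrArg _ (by ring)), ?_, ?_⟩
  · exact ((key (2*k) N hN (by omega) n).1).trans (congrArg _ (by ring))
  · exact ((key (2*k) N hN (by omega) n).2).trans (congrArg _ (by ring))
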